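/- Let ι be a nonempty finite type and let E : (ι → ℝ) → ℝ be convex (ConvexOn ℝ Set.univ E). Define the convex conjugate E* : (ι → ℝ) → EReal by E*(μ) = ⨆_{φ : ι → ℝ} ((∑ i, μ i * φ i) − E(φ)), the supremum taken in EReal. Equip ι → ℝ with the coordinatewise order, so meet and join are coordinatewise min and max and x⁺ = x ⊔ 0. Then the following are equivalent: (1) E is submodular, i.e. E(φ₁ ⊓ φ₂) + E(φ₁ ⊔ φ₂) ≤ E(φ₁) + E(φ₂) for all φ₁, φ₂; (2) E* is substitutable, i.e. for all μ₁, μ₂ : ι → ℝ and every t₂₁ with 0 ≤ t₂₁ ≤ (μ₂ − μ₁)⁺ there exists t₁₂ with 0 ≤ t₁₂ ≤ (μ₁ − μ₂)⁺ such that E*(μ₁ + t₂₁ − t₁₂) + E*(μ₂ − t₂₁ + t₁₂) ≤ E*(μ₁) + E*(μ₂) in EReal. -/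

import Mathlib

open scoped BigOperators

/-- The convex conjugate of `E : (ι → ℝ) → ℝ`, valued in `EReal = ℝ ∪ {±∞}`,
with respect to the standard pairing `⟨μ, φ⟩ = ∑ i, μ i * φ i`. -/
noncomputable def convexConj {ι : Type*} [Fintype ι]
    (E : (ι → ℝ) → ℝ) (μ : ι → ℝ) : EReal :=
  ⨆ φ : ι → ℝ, ((∑ i, μ i * φ i - E φ : ℝ) : EReal)

section AuxAll
variable {ι : Type*} [Fintype ι]

/-! ### scalar lemmas -/

private lemma key_ineq (p q x y t : ℝ) (ht0 : 0 ≤ t) (htb : t ≤ max (q - p) 0) :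
    p * x + q * y + t * (x - y) - max (p - q) 0 * max (x - y) 0
      ≤ p * min x y + q * max x y := by
  rcases le_total x y with h | h
  · rw [min_eq_left h, max_eq_right h, max_eq_right (by linarith : x - y ≤ 0)]
    nlinarith
  · rw [min_eq_right h, max_eq_left h, max_eq_left (by linarith : (0:ℝ) ≤ x - y)]
    rcases le_total p q with hpq | hpq
    · rw [max_eq_right (by linarith : p - q ≤ 0)]
      have ht : t ≤ q - p := le_trans htb (by rw [max_eq_left (by linarith)])
      nlinarith
    · rw [max_eq_left (by linarith : (0:ℝ) ≤ p - q)]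
      have ht : t ≤ 0 := le_trans htb (by rw [max_eq_right (by linarith)])
      nlinarith

private lemma pair_ineq (p q x y u v : ℝ) (hu : u = if y < x then max (q - p) 0 else 0)
    (hv0 : 0 ≤ v) (hvb : v ≤ max (p - q) 0) :
    p * min x y + q * max x y ≤ (p + u - v) * x + (q - u + v) * y := by
  rcases lt_or_ge y x with h | h
  · rw [if_pos h] at hu
    rw [min_eq_right h.le, max_eq_left h.le]
    subst hu
    rcases le_total p q with hpq | hpq
    · have hv : v = 0 := le_antisymm (le_trans hvb (by rw [max_eq_right (by linarith)])) hv0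
      rw [max_eq_left (by linarith : (0:ℝ) ≤ q - p), hv]
      nlinarith
    · have hv : v ≤ p - q := le_trans hvb (by rw [max_eq_left (by linarith)])
      rw [max_eq_right (by linarith : q - p ≤ 0)]
      nlinarith
  · rw [if_neg (not_lt.2 h)] at hu
    subst hu
    rw [min_eq_left h, max_eq_right h]
    nlinarith

/-! ### conjugate basics -/

lemma pair_le_conj (E : (ι → ℝ) → ℝ) (μ φ : ι → ℝ) :
    ((∑ i, μ i * φ i - E φ : ℝ) : EReal) ≤ convexConj E μ :=
  le_iSup (fun φ : ι → ℝ => ((∑ i, μ i * φ i - E φ : ℝ) : EReal)) φ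

lemma conj_le_coe (E : (ι → ℝ) → ℝ) (μ : ι → ℝ) (c : ℝ)
    (h : ∀ φ, ∑ i, μ i * φ i - E φ ≤ c) : convexConj E μ ≤ (c : EReal) :=
  iSup_le fun φ => EReal.coe_le_coe_iff.2 (h φ)

lemma conj_ne_bot (E : (ι → ℝ) → ℝ) (μ : ι → ℝ) : convexConj E μ ≠ ⊥ :=
  ((EReal.bot_lt_coe _).trans_le (pair_le_conj E μ 0)).ne'

lemma sum_conj_le (E : (ι → ℝ) → ℝ) (ν₁ ν₂ : ι → ℝ) (c : ℝ)
    (h : ∀ φ₁ φ₂ : ι → ℝ, (∑ i, ν₁ i * φ₁ i - E φ₁) + (∑ i, ν₂ i * φ₂ i - E φ₂) ≤ c) :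
    convexConj E ν₁ + convexConj E ν₂ ≤ (c : EReal) := by
  have h1 : convexConj E ν₁ ≤ ((c - (∑ i, ν₂ i * (0:ι→ℝ) i - E 0) : ℝ) : EReal) :=
    conj_le_coe _ _ _ fun φ => by linarith [h φ 0]
  have h2 : convexConj E ν₂ ≤ ((c - (∑ i, ν₁ i * (0:ι→ℝ) i - E 0) : ℝ) : EReal) :=
    conj_le_coe _ _ _ fun φ => by linarith [h 0 φ]
  have ht1 : convexConj E ν₁ ≠ ⊤ := (h1.trans_lt (EReal.coe_lt_top _)).ne
  have ht2 : convexConj E ν₂ ≠ ⊤ := (h2.trans_lt (EReal.coe_lt_top _)).ne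
  set s₁ := (convexConj E ν₁).toReal with hs₁
  set s₂ := (convexConj E ν₂).toReal with hs₂
  have e1 : convexConj E ν₁ = (s₁ : EReal) := (EReal.coe_toReal ht1 (conj_ne_bot E ν₁)).symm
  have e2 : convexConj E ν₂ = (s₂ : EReal) := (EReal.coe_toReal ht2 (conj_ne_bot E ν₂)).symm
  rw [e1, e2, ← EReal.coe_add, EReal.coe_le_coe_iff]
  by_contra hcon
  push_neg at hcon
  have h1' : ((c - s₂ : ℝ) : EReal) < convexConj E ν₁ := by
    rw [e1, EReal.coe_lt_coe_iff]; linarith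
  rw [convexConj, lt_iSup_iff] at h1'
  obtain ⟨φ₁, hφ₁⟩ := h1'
  rw [EReal.coe_lt_coe_iff] at hφ₁
  have h2' : convexConj E ν₂ ≤ ((c - (∑ i, ν₁ i * φ₁ i - E φ₁) : ℝ) : EReal) :=
    conj_le_coe _ _ _ fun φ => by linarith [h φ₁ φ]
  rw [e2, EReal.coe_le_coe_iff] at h2'
  linarith

/-! ### canonical basis and linear functional representation -/

noncomputable def eB (i : ι) : ι → ℝ := @Pi.single ι (fun _ => ℝ) _ (Classical.decEq ι) i 1

lemma sum_smul_eB (y : ι → ℝ) : (∑ i, y i • eB i : ι → ℝ) = y := by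
  classical
  ext j
  rw [Finset.sum_apply]
  have h : ∀ i, (y i • eB i) j = if i = j then y i else 0 := by
    intro i
    rw [Pi.smul_apply, eB, Pi.single_apply, smul_eq_mul]
    by_cases h : i = j
    · subst h; simp
    · simp [h, Ne.symm h]
  rw [Finset.sum_congr rfl fun i _ => h i]
  simp

lemma clm_rep (f : ((ι → ℝ) × ℝ) →L[ℝ] ℝ) (y : ι → ℝ) (s : ℝ) :
    f (y, s) = (∑ i, y i * f (eB i, 0)) + s * f (0, 1) := by
  have h1 : ((y, (0:ℝ)) : (ι → ℝ) × ℝ) = ∑ i, y i • ((eB i : ι → ℝ), (0:ℝ)) := by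
    apply Prod.ext
    · rw [Prod.fst_sum]
      simp only [Prod.smul_mk]
      exact (sum_smul_eB y).symm
    · rw [Prod.snd_sum]
      simp
  have h0 : ((y, s) : (ι → ℝ) × ℝ) = (y, 0) + s • ((0:ι→ℝ), (1:ℝ)) := by
    ext <;> simp
  rw [h0, map_add, h1, map_sum]
  simp only [map_smul, smul_eq_mul]

/-! ### subgradient existence -/

lemma exists_subgrad {E : (ι → ℝ) → ℝ} (hE : ConvexOn ℝ Set.univ E) (ψ : ι → ℝ) :
    ∃ μ : ι → ℝ, ∀ x, E ψ + (∑ i, μ i * x i - ∑ i, μ i * ψ i) ≤ E x := by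
  classical
  have hcont : Continuous E := by
    rw [← continuousOn_univ]
    exact hE.continuousOn isOpen_univ
  set U : Set ((ι → ℝ) × ℝ) := {p | E p.1 < p.2} with hU
  have hUopen : IsOpen U := isOpen_lt (hcont.comp continuous_fst) continuous_snd
  have hUconv : Convex ℝ U := by
    rintro ⟨x, s⟩ hx ⟨x', s'⟩ hx' l m hl hm hlm
    simp only [hU, Set.mem_setOf_eq] at hx hx' ⊢
    have hle : E (l • x + m • x') ≤ l * E x + m * E x' :=
      hE.2 (Set.mem_univ x) (Set.mem_univ x') hl hm hlm
    have hlt : l * E x + m * E x' < l * s + m * s' := by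
      rcases hl.eq_or_lt with rfl | hl'
      · have hm' : m = 1 := by linarith
        subst hm'; simpa using hx'
      rcases hm.eq_or_lt with rfl | hm'
      · have hl'' : l = 1 := by linarith
        subst hl''; simpa using hx
      · exact add_lt_add (by nlinarith) (by nlinarith)
    exact lt_of_le_of_lt hle (by simpa using hlt)
  have hnotmem : ((ψ, E ψ) : (ι → ℝ) × ℝ) ∉ U := by simp [hU]
  obtain ⟨f, hf⟩ := geometric_hahn_banach_open_point hUconv hUopen hnotmem
  set β : ℝ := f (0, 1) with hβ
  have hfrep : ∀ (y : ι → ℝ) (s : ℝ), f (y, s) = (∑ i, y i * f (eB i, 0)) + s * β :=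
    fun y s => clm_rep f y s
  have hβneg : β < 0 := by
    have h1 : ((ψ, E ψ + 1) : (ι → ℝ) × ℝ) ∈ U := by simp [hU]
    have := hf _ h1
    rw [hfrep ψ (E ψ + 1), hfrep ψ (E ψ)] at this
    nlinarith
  have hkey : ∀ x : ι → ℝ, f (x, E x) ≤ f (ψ, E ψ) := by
    intro x
    by_contra hcon
    push_neg at hcon
    set D : ℝ := f (x, E x) - f (ψ, E ψ) with hD
    have hDpos : 0 < D := by simp [hD]; linarith
    set ε : ℝ := D / (-2 * β) with hε
    have hεpos : 0 < ε := div_pos hDpos (by linarith)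
    have hmem : ((x, E x + ε) : (ι → ℝ) × ℝ) ∈ U := by
      simp only [hU, Set.mem_setOf_eq]; linarith
    have h2 := hf _ hmem
    rw [hfrep x (E x + ε)] at h2
    have hfx : f (x, E x) = (∑ i, x i * f (eB i, 0)) + E x * β := hfrep x (E x)
    have h3 : f (x, E x) + ε * β < f (ψ, E ψ) := by rw [hfx]; nlinarith [h2]
    have hεm : ε * (-2 * β) = D := div_mul_cancel₀ _ (by linarith : (-2) * β ≠ 0)
    nlinarith [h3, hεm, hDpos]
  refine ⟨fun i => f (eB i, 0) / (-β), fun x => ?_⟩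
  have hx := hkey x
  rw [hfrep x (E x), hfrep ψ (E ψ)] at hx
  have hβpos : 0 < -β := by linarith
  have hsum : ∀ z : ι → ℝ, (∑ i, (f (eB i, 0) / (-β)) * z i) = (∑ i, z i * f (eB i, 0)) / (-β) := by
    intro z
    rw [Finset.sum_div]
    exact Finset.sum_congr rfl fun i _ => by ring
  rw [hsum x, hsum ψ, div_sub_div_same]
  have h2 : (∑ i, x i * f (eB i, 0)) - (∑ i, ψ i * f (eB i, 0)) ≤ (E x - E ψ) * (-β) := by
    nlinarith [hx]
  have h3 : ((∑ i, x i * f (eB i, 0)) - (∑ i, ψ i * f (eB i, 0))) / (-β) ≤ E x - E ψ :=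
    (div_le_iff₀ hβpos).2 h2
  linarith

/-! ### the separation lemma for the forward direction -/

lemma exists_t (a : ι → ℝ) (ha : ∀ i, 0 ≤ a i) (Ψ : (ι → ℝ) → (ι → ℝ) → ℝ)
    (hconc : ∀ (φ₁ φ₂ φ₁' φ₂' : ι → ℝ) (l m : ℝ), 0 ≤ l → 0 ≤ m → l + m = 1 →
      l * Ψ φ₁ φ₂ + m * Ψ φ₁' φ₂' ≤ Ψ (l • φ₁ + m • φ₁') (l • φ₂ + m • φ₂'))
    (hub : ∀ φ₁ φ₂, Ψ φ₁ φ₂ ≤ ∑ i, a i * max (φ₁ i - φ₂ i) 0) :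
    ∃ t : ι → ℝ, (∀ i, 0 ≤ t i) ∧ (∀ i, t i ≤ a i) ∧
      ∀ φ₁ φ₂, Ψ φ₁ φ₂ ≤ ∑ i, t i * (φ₁ i - φ₂ i) := by
  classical
  set k : (ι → ℝ) → ℝ := fun y => ∑ i, a i * max (y i) 0 with hk
  have hkconv : ∀ (y z : ι → ℝ) (l m : ℝ), 0 ≤ l → 0 ≤ m →
      k (l • y + m • z) ≤ l * k y + m * k z := by
    intro y z l m hl hm
    rw [hk]
    simp only
    rw [Finset.mul_sum, Finset.mul_sum, ← Finset.sum_add_distrib]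
    apply Finset.sum_le_sum
    intro i _
    have h1 : max (l * y i + m * z i) 0 ≤ l * max (y i) 0 + m * max (z i) 0 := by
      apply max_le
      · have := mul_le_mul_of_nonneg_left (le_max_left (y i) 0) hl
        have := mul_le_mul_of_nonneg_left (le_max_left (z i) 0) hm
        linarith
      · positivity
    have h2 : (l • y + m • z) i = l * y i + m * z i := by simp
    rw [h2]
    nlinarith [ha i, h1]
  have hkhom : ∀ (y : ι → ℝ) (l : ℝ), 0 ≤ l → k (l • y) = l * k y := by
    intro y l hl
    rw [hk]
    simp only
    rw [Finset.mul_sum]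
    apply Finset.sum_congr rfl
    intro i _
    have h3 : max (l * y i) 0 = l * max (y i) 0 := by
      rw [mul_max_of_nonneg _ _ hl, mul_zero]
    simp only [Pi.smul_apply, smul_eq_mul]
    rw [h3]; ring
  have hk0 : k 0 = 0 := by simp [hk]
  set U : Set ((ι → ℝ) × ℝ) := {p | k p.1 < p.2} with hU
  set S : Set ((ι → ℝ) × ℝ) := {p | ∃ φ₁ φ₂ : ι → ℝ, p.1 = φ₁ - φ₂ ∧ p.2 ≤ Ψ φ₁ φ₂} with hS
  have hUopen : IsOpen U := by
    apply isOpen_lt _ continuous_snd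
    apply continuous_finset_sum
    intro i _
    exact continuous_const.mul (((continuous_apply i).comp continuous_fst).max continuous_const)
  have hUconv : Convex ℝ U := by
    rintro ⟨y, s⟩ hy ⟨z, r⟩ hz l m hl hm hlm
    simp only [hU, Set.mem_setOf_eq] at hy hz ⊢
    have h1 := hkconv y z l m hl hm
    have h2 : l * k y + m * k z < l * s + m * r := by
      rcases hl.eq_or_lt with rfl | hl'
      · have : m = 1 := by linarith
        subst this; simpa using hz
      rcases hm.eq_or_lt with rfl | hm'
      · have : l = 1 := by linarith
        subst this; simpa using hy
      · exact add_lt_add (by nlinarith) (by nlinarith)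
    exact lt_of_le_of_lt (by simpa using h1) (by simpa using h2)
  have hSconv : Convex ℝ S := by
    rintro ⟨y, s⟩ hy ⟨z, r⟩ hz l m hl hm hlm
    obtain ⟨φ₁, φ₂, hy1, hy2⟩ := hy
    obtain ⟨φ₁', φ₂', hz1, hz2⟩ := hz
    refine ⟨l • φ₁ + m • φ₁', l • φ₂ + m • φ₂', ?_, ?_⟩
    · simp only [Prod.smul_mk, Prod.mk_add_mk] at *
      rw [hy1, hz1]
      ext i; simp; ring
    · simp only [Prod.smul_mk, Prod.mk_add_mk, smul_eq_mul] at hy2 hz2 ⊢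
      calc l * s + m * r ≤ l * Ψ φ₁ φ₂ + m * Ψ φ₁' φ₂' := by
            have := mul_le_mul_of_nonneg_left hy2 hl
            have := mul_le_mul_of_nonneg_left hz2 hm
            linarith
        _ ≤ _ := hconc φ₁ φ₂ φ₁' φ₂' l m hl hm hlm
  have hdisj : Disjoint U S := by
    rw [Set.disjoint_left]
    rintro ⟨y, s⟩ hy ⟨φ₁, φ₂, h1, h2⟩
    simp only [hU, Set.mem_setOf_eq] at hy
    simp only at h1 h2
    have h3 := hub φ₁ φ₂
    have h4 : k y = ∑ i, a i * max (φ₁ i - φ₂ i) 0 := by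
      rw [h1, hk]; simp
    linarith [hy, h2, h3]
  obtain ⟨f, u, hfU, hfS⟩ := geometric_hahn_banach_open hUconv hUopen hSconv hdisj
  set β : ℝ := f (0, 1) with hβ
  have hrep : ∀ (y : ι → ℝ) (s : ℝ), f (y, s) = (∑ i, y i * f (eB i, 0)) + s * β :=
    fun y s => clm_rep f y s
  have hflin : ∀ (y : ι → ℝ) (s l : ℝ), f (l • y, l * s) = l * f (y, s) := by
    intro y s l
    have h5 : ((l • y, l * s) : (ι → ℝ) × ℝ) = l • ((y, s) : (ι → ℝ) × ℝ) := by
      simp [Prod.smul_mk, smul_eq_mul]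
    rw [h5, map_smul, smul_eq_mul]
  have hscale : ∀ (y : ι → ℝ) (s : ℝ), k y < s → ∀ l : ℝ, 0 < l → l * f (y, s) < u := by
    intro y s hys l hl
    rw [← hflin]
    apply hfU
    simp only [hU, Set.mem_setOf_eq, hkhom y l hl.le]
    exact mul_lt_mul_of_pos_left hys hl
  have h01 : k 0 < 1 := by rw [hk0]; norm_num
  have hu0 : 0 ≤ u := by
    by_contra hcon
    push_neg at hcon
    have hβ1 : (1:ℝ) * f (0, 1) < u := hscale 0 1 h01 1 one_pos
    have hβneg' : f (0, 1) < 0 := by linarith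
    have hlpos : 0 < u / (2 * f (0, 1)) := div_pos_of_neg_of_neg hcon (by linarith)
    have := hscale 0 1 h01 _ hlpos
    rw [div_mul_eq_mul_div, mul_comm (2:ℝ) (f (0,1)), ← div_div,
      mul_div_cancel_right₀ _ (ne_of_lt hβneg')] at this
    linarith
  have hepi : ∀ (y : ι → ℝ) (s : ℝ), k y < s → f (y, s) ≤ 0 := by
    intro y s hys
    by_contra hcon
    push_neg at hcon
    have hlpos : 0 < (u + 1) / f (y, s) := div_pos (by linarith) hcon
    have := hscale y s hys _ hlpos
    rw [div_mul_cancel₀ _ (ne_of_gt hcon)] at this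
    linarith
  have hβ0 : β ≤ 0 := by
    by_contra hcon
    push_neg at hcon
    have := hepi 0 1 h01
    rw [hrep 0 1] at this
    simp at this
    linarith
  have hβneg : β < 0 := by
    rcases hβ0.lt_or_eq with h | heq
    · exact h
    · exfalso
      have hzero : ∀ y : ι → ℝ, f (y, 0) ≤ 0 := by
        intro y
        have h6 := hepi y (k y + 1) (by linarith)
        rw [hrep y (k y + 1), heq] at h6
        rw [hrep y 0, heq]
        simp only [mul_zero, add_zero, mul_one] at h6 ⊢
        linarith
      have hzero' : ∀ y : ι → ℝ, f (y, 0) = 0 := by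
        intro y
        have h7 := hzero y
        have h8 := hzero (-y)
        have h9 : ((-y, (0:ℝ)) : (ι → ℝ) × ℝ) = (-1 : ℝ) • ((y, 0) : (ι → ℝ) × ℝ) := by
          simp [Prod.smul_mk]
        rw [h9, map_smul, smul_eq_mul] at h8
        linarith
      have hfzero : ∀ p : (ι → ℝ) × ℝ, f p = 0 := by
        rintro ⟨y, s⟩
        rw [hrep y s, heq]
        have h6' := hzero' y
        rw [hrep y 0, heq] at h6'
        simp only [mul_zero, add_zero] at h6' ⊢
        linarith
      have h10 : ((0, 1) : (ι → ℝ) × ℝ) ∈ U := by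
        simp only [hU, Set.mem_setOf_eq]; exact h01
      have h11 := hfU _ h10
      rw [hfzero _] at h11
      have h12 : ((0, Ψ 0 0) : (ι → ℝ) × ℝ) ∈ S := ⟨0, 0, by simp, le_refl _⟩
      have h13 := hfS _ h12
      rw [hfzero _] at h13
      linarith
  have hβpos : 0 < -β := by linarith
  have hbdry : ∀ y : ι → ℝ, f (y, k y) ≤ 0 := by
    intro y
    by_contra hcon
    push_neg at hcon
    set ε : ℝ := f (y, k y) / (2 * (-β)) with hε
    have hεpos : 0 < ε := div_pos hcon (by linarith)
    have h14 := hepi y (k y + ε) (by linarith)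
    rw [hrep y (k y + ε)] at h14
    have h15 : f (y, k y) = (∑ i, y i * f (eB i, 0)) + k y * β := hrep y (k y)
    have hεm : ε * (2 * (-β)) = f (y, k y) := div_mul_cancel₀ _ (by linarith)
    nlinarith [h14, h15, hεm]
  have heB_apply : ∀ i j : ι, eB i j = if j = i then (1:ℝ) else 0 := by
    intro i j
    rw [eB]
    rw [Pi.single_apply]
  have hkeB : ∀ i, k (eB i) = a i := by
    intro i
    rw [hk]
    simp only
    have : ∀ j, a j * max (eB i j) 0 = if j = i then a j else 0 := by
      intro j
      rw [heB_apply]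
      by_cases h : j = i <;> simp [h]
    rw [Finset.sum_congr rfl fun j _ => this j, Finset.sum_ite_eq' Finset.univ i a]
    simp
  have hkeBneg : ∀ i, k (-eB i) = 0 := by
    intro i
    rw [hk]
    simp only
    apply Finset.sum_eq_zero
    intro j _
    have : (-eB i) j = -(eB i j) := by simp
    rw [this, heB_apply]
    by_cases h : j = i <;> simp [h]
  have hsum_eB : ∀ (i : ι) (g : ι → ℝ), (∑ j, eB i j * g j) = g i := by
    intro i g
    have : ∀ j, eB i j * g j = if j = i then g j else 0 := by
      intro j
      rw [heB_apply]
      by_cases h : j = i <;> simp [h]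
    rw [Finset.sum_congr rfl fun j _ => this j, Finset.sum_ite_eq' Finset.univ i g]
    simp
  have hfnn : ∀ i, 0 ≤ f (eB i, 0) := by
    intro i
    have h16 := hbdry (-eB i)
    rw [hkeBneg i, hrep (-eB i) 0] at h16
    have h17 : (∑ j, (-eB i) j * f (eB j, 0)) = -f (eB i, 0) := by
      have : ∀ j, (-eB i) j * f (eB j, 0) = -(eB i j * f (eB j, 0)) := by
        intro j; simp [neg_mul]
      rw [Finset.sum_congr rfl fun j _ => this j, Finset.sum_neg_distrib,
        hsum_eB i (fun j => f (eB j, 0))]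
    rw [h17] at h16
    linarith
  have hfub : ∀ i, f (eB i, 0) ≤ a i * (-β) := by
    intro i
    have h18 := hbdry (eB i)
    rw [hkeB i, hrep (eB i) (a i), hsum_eB i (fun j => f (eB j, 0))] at h18
    nlinarith
  refine ⟨fun i => f (eB i, 0) / (-β), fun i => div_nonneg (hfnn i) hβpos.le,
    fun i => (div_le_iff₀ hβpos).2 (hfub i), ?_⟩
  intro φ₁ φ₂
  have hmem : ((φ₁ - φ₂, Ψ φ₁ φ₂) : (ι → ℝ) × ℝ) ∈ S := ⟨φ₁, φ₂, rfl, le_refl _⟩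
  have h19 := hfS _ hmem
  rw [hrep (φ₁ - φ₂) (Ψ φ₁ φ₂)] at h19
  have h20 : (∑ i, (φ₁ - φ₂) i * f (eB i, 0))
      = (∑ i, (f (eB i, 0) / (-β)) * (φ₁ i - φ₂ i)) * (-β) := by
    rw [Finset.sum_mul]
    apply Finset.sum_congr rfl
    intro i _
    have : (φ₁ - φ₂) i = φ₁ i - φ₂ i := by simp
    rw [this]
    field_simp [hβneg.ne]
  rw [h20] at h19
  by_contra hcon
  push_neg at hcon
  nlinarith [h19, hu0, hβpos, hcon]

end AuxAll

/-- Duality between submodularity and substitutability in the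
finite-dimensional lattice `ι → ℝ`: a convex function `E` is submodular iff its
convex conjugate `E*` is substitutable. -/
theorem submodular_iff_conj_substitutable
    {ι : Type*} [Fintype ι] [Nonempty ι]
    (E : (ι → ℝ) → ℝ) (hE : ConvexOn ℝ Set.univ E) :
    (∀ φ₁ φ₂ : ι → ℝ, E (φ₁ ⊓ φ₂) + E (φ₁ ⊔ φ₂) ≤ E φ₁ + E φ₂) ↔
      (∀ μ₁ μ₂ t₂₁ : ι → ℝ, 0 ≤ t₂₁ → t₂₁ ≤ (μ₂ - μ₁) ⊔ 0 →
        ∃ t₁₂ : ι → ℝ, 0 ≤ t₁₂ ∧ t₁₂ ≤ (μ₁ - μ₂) ⊔ 0 ∧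
          convexConj E (μ₁ + t₂₁ - t₁₂) + convexConj E (μ₂ - t₂₁ + t₁₂) ≤
            convexConj E μ₁ + convexConj E μ₂) := by
  classical
  have hsplit : ∀ w g h : ι → ℝ, (∑ i, w i * (g i - h i))
      = (∑ i, w i * g i) - (∑ i, w i * h i) := by
    intro w g h
    rw [← Finset.sum_sub_distrib]
    exact Finset.sum_congr rfl fun i _ => by ring
  have hinf : ∀ (g h : ι → ℝ) (i : ι), (g ⊓ h) i = min (g i) (h i) := by
    intro g h i; simp [Pi.inf_apply]
  have hsup : ∀ (g h : ι → ℝ) (i : ι), (g ⊔ h) i = max (g i) (h i) := by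
    intro g h i; simp [Pi.sup_apply]
  constructor
  · -- submodular → substitutable
    intro hsub μ₁ μ₂ t₂₁ ht0 htb
    have ht0' : ∀ i, 0 ≤ t₂₁ i := fun i => by simpa using ht0 i
    have htb' : ∀ i, t₂₁ i ≤ max (μ₂ i - μ₁ i) 0 := fun i => by
      have := htb i
      simpa [hsup, Pi.sub_apply] using this
    by_cases h1 : convexConj E μ₁ = ⊤
    · refine ⟨0, le_refl 0, le_sup_right, ?_⟩
      rw [h1, EReal.top_add_of_ne_bot (conj_ne_bot E μ₂)]
      exact le_top
    by_cases h2 : convexConj E μ₂ = ⊤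
    · refine ⟨0, le_refl 0, le_sup_right, ?_⟩
      rw [h2, EReal.add_top_of_ne_bot (conj_ne_bot E μ₁)]
      exact le_top
    set r₁ := (convexConj E μ₁).toReal with hr₁
    set r₂ := (convexConj E μ₂).toReal with hr₂
    have e1 : convexConj E μ₁ = (r₁ : EReal) := (EReal.coe_toReal h1 (conj_ne_bot E μ₁)).symm
    have e2 : convexConj E μ₂ = (r₂ : EReal) := (EReal.coe_toReal h2 (conj_ne_bot E μ₂)).symm
    set c : ℝ := r₁ + r₂ with hc
    set a : ι → ℝ := fun i => max (μ₁ i - μ₂ i) 0 with ha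
    set Ψ : (ι → ℝ) → (ι → ℝ) → ℝ := fun φ₁ φ₂ =>
      (∑ i, μ₁ i * φ₁ i) + (∑ i, μ₂ i * φ₂ i) + (∑ i, t₂₁ i * (φ₁ i - φ₂ i))
        - E φ₁ - E φ₂ - c with hΨdef
    have hlin : ∀ (l m : ℝ) (w g g' : ι → ℝ),
        (∑ i, w i * (l • g + m • g') i) = l * (∑ i, w i * g i) + m * (∑ i, w i * g' i) := by
      intro l m w g g'
      rw [Finset.mul_sum, Finset.mul_sum, ← Finset.sum_add_distrib]
      apply Finset.sum_congr rfl
      intro i _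
      simp only [Pi.add_apply, Pi.smul_apply, smul_eq_mul]
      ring
    have hconc : ∀ (φ₁ φ₂ φ₁' φ₂' : ι → ℝ) (l m : ℝ), 0 ≤ l → 0 ≤ m → l + m = 1 →
        l * Ψ φ₁ φ₂ + m * Ψ φ₁' φ₂' ≤ Ψ (l • φ₁ + m • φ₁') (l • φ₂ + m • φ₂') := by
      intro φ₁ φ₂ φ₁' φ₂' l m hl hm hlm
      have hE1 : E (l • φ₁ + m • φ₁') ≤ l * E φ₁ + m * E φ₁' :=
        hE.2 (Set.mem_univ _) (Set.mem_univ _) hl hm hlm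
      have hE2 : E (l • φ₂ + m • φ₂') ≤ l * E φ₂ + m * E φ₂' :=
        hE.2 (Set.mem_univ _) (Set.mem_univ _) hl hm hlm
      have hl1 := hlin l m μ₁ φ₁ φ₁'
      have hl2 := hlin l m μ₂ φ₂ φ₂'
      have hl3 : (∑ i, t₂₁ i * ((l • φ₁ + m • φ₁') i - (l • φ₂ + m • φ₂') i))
          = l * (∑ i, t₂₁ i * (φ₁ i - φ₂ i)) + m * (∑ i, t₂₁ i * (φ₁' i - φ₂' i)) := by
        rw [Finset.mul_sum, Finset.mul_sum, ← Finset.sum_add_distrib]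
        apply Finset.sum_congr rfl
        intro i _
        simp only [Pi.add_apply, Pi.smul_apply, smul_eq_mul]
        ring
      have hcc : l * c + m * c = c := by rw [← add_mul, hlm, one_mul]
      simp only [hΨdef]
      rw [hl1, hl2, hl3]
      linarith [hE1, hE2, hcc]
    have hub : ∀ φ₁ φ₂ : ι → ℝ, Ψ φ₁ φ₂ ≤ ∑ i, a i * max (φ₁ i - φ₂ i) 0 := by
      intro φ₁ φ₂
      have hper : ∀ i, μ₁ i * φ₁ i + μ₂ i * φ₂ i + t₂₁ i * (φ₁ i - φ₂ i)
          - a i * max (φ₁ i - φ₂ i) 0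
          ≤ μ₁ i * min (φ₁ i) (φ₂ i) + μ₂ i * max (φ₁ i) (φ₂ i) := by
        intro i
        have := key_ineq (μ₁ i) (μ₂ i) (φ₁ i) (φ₂ i) (t₂₁ i) (ht0' i) (htb' i)
        simpa [ha] using this
      have hsum := Finset.sum_le_sum (fun i (_ : i ∈ Finset.univ) => hper i)
      rw [Finset.sum_add_distrib] at hsum
      rw [show (∑ i, (μ₁ i * φ₁ i + μ₂ i * φ₂ i + t₂₁ i * (φ₁ i - φ₂ i)
          - a i * max (φ₁ i - φ₂ i) 0))
        = (∑ i, μ₁ i * φ₁ i) + (∑ i, μ₂ i * φ₂ i) + (∑ i, t₂₁ i * (φ₁ i - φ₂ i))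
          - (∑ i, a i * max (φ₁ i - φ₂ i) 0) by
        rw [Finset.sum_sub_distrib, Finset.sum_add_distrib, Finset.sum_add_distrib]] at hsum
      -- Fenchel–Young at the meet and join
      have hFY1 : (∑ i, μ₁ i * min (φ₁ i) (φ₂ i)) - E (φ₁ ⊓ φ₂) ≤ r₁ := by
        have h := pair_le_conj E μ₁ (φ₁ ⊓ φ₂)
        rw [e1, EReal.coe_le_coe_iff] at h
        have : (∑ i, μ₁ i * (φ₁ ⊓ φ₂) i) = ∑ i, μ₁ i * min (φ₁ i) (φ₂ i) :=
          Finset.sum_congr rfl fun i _ => by rw [hinf]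
        linarith [h, this.ge, this.le]
      have hFY2 : (∑ i, μ₂ i * max (φ₁ i) (φ₂ i)) - E (φ₁ ⊔ φ₂) ≤ r₂ := by
        have h := pair_le_conj E μ₂ (φ₁ ⊔ φ₂)
        rw [e2, EReal.coe_le_coe_iff] at h
        have : (∑ i, μ₂ i * (φ₁ ⊔ φ₂) i) = ∑ i, μ₂ i * max (φ₁ i) (φ₂ i) :=
          Finset.sum_congr rfl fun i _ => by rw [hsup]
        linarith [h, this.ge, this.le]
      have hsm := hsub φ₁ φ₂
      simp only [hΨdef]
      linarith [hsum, hFY1, hFY2, hsm]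
    obtain ⟨t, htn, hta, hΨt⟩ := exists_t a (fun i => le_max_right _ _) Ψ hconc hub
    refine ⟨t, ?_, ?_, ?_⟩
    · intro i; simpa using htn i
    · intro i
      have := hta i
      simp only [ha] at this
      simpa [hsup, Pi.sub_apply] using this
    · rw [e1, e2, ← EReal.coe_add]
      apply sum_conj_le
      intro φ₁ φ₂
      have hP := hΨt φ₁ φ₂
      simp only [hΨdef] at hP
      have hx1 : (∑ i, (μ₁ + t₂₁ - t) i * φ₁ i)
          = (∑ i, μ₁ i * φ₁ i) + (∑ i, t₂₁ i * φ₁ i) - (∑ i, t i * φ₁ i) := by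
        rw [← Finset.sum_add_distrib, ← Finset.sum_sub_distrib]
        exact Finset.sum_congr rfl fun i _ => by simp [Pi.add_apply, Pi.sub_apply]; ring
      have hx2 : (∑ i, (μ₂ - t₂₁ + t) i * φ₂ i)
          = (∑ i, μ₂ i * φ₂ i) - (∑ i, t₂₁ i * φ₂ i) + (∑ i, t i * φ₂ i) := by
        rw [← Finset.sum_sub_distrib, ← Finset.sum_add_distrib]
        exact Finset.sum_congr rfl fun i _ => by simp [Pi.add_apply, Pi.sub_apply]; ring
      have hx3 := hsplit t₂₁ φ₁ φ₂
      have hx4 := hsplit t φ₁ φ₂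
      rw [hx1, hx2]
      linarith [hP, hx3, hx4]
  · -- substitutable → submodular
    intro hsubst φ₁ φ₂
    obtain ⟨μ₁, hμ₁⟩ := exists_subgrad hE (φ₁ ⊓ φ₂)
    obtain ⟨μ₂, hμ₂⟩ := exists_subgrad hE (φ₁ ⊔ φ₂)
    set r₁ : ℝ := (∑ i, μ₁ i * (φ₁ ⊓ φ₂) i) - E (φ₁ ⊓ φ₂) with hr₁
    set r₂ : ℝ := (∑ i, μ₂ i * (φ₁ ⊔ φ₂) i) - E (φ₁ ⊔ φ₂) with hr₂
    have e1 : convexConj E μ₁ = (r₁ : EReal) := by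
      apply le_antisymm
      · apply conj_le_coe
        intro x
        have := hμ₁ x
        simp only [hr₁]
        linarith
      · exact pair_le_conj E μ₁ (φ₁ ⊓ φ₂)
    have e2 : convexConj E μ₂ = (r₂ : EReal) := by
      apply le_antisymm
      · apply conj_le_coe
        intro x
        have := hμ₂ x
        simp only [hr₂]
        linarith
      · exact pair_le_conj E μ₂ (φ₁ ⊔ φ₂)
    set t₂₁ : ι → ℝ := fun i => if φ₂ i < φ₁ i then max (μ₂ i - μ₁ i) 0 else 0 with ht₂₁
    have h0 : (0 : ι → ℝ) ≤ t₂₁ := by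
      intro i
      simp only [ht₂₁, Pi.zero_apply]
      split
      · exact le_max_right _ _
      · exact le_refl 0
    have hb : t₂₁ ≤ (μ₂ - μ₁) ⊔ 0 := by
      intro i
      have : ((μ₂ - μ₁) ⊔ 0) i = max (μ₂ i - μ₁ i) 0 := by
        simp [hsup, Pi.sub_apply]
      rw [this]
      simp only [ht₂₁]
      split
      · exact le_refl _
      · exact le_max_right _ _
    obtain ⟨t₁₂, ht₁₂0, ht₁₂b, hle⟩ := hsubst μ₁ μ₂ t₂₁ h0 hb
    have ht₁₂0' : ∀ i, 0 ≤ t₁₂ i := fun i => by simpa using ht₁₂0 i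
    have ht₁₂b' : ∀ i, t₁₂ i ≤ max (μ₁ i - μ₂ i) 0 := fun i => by
      have := ht₁₂b i
      simpa [hsup, Pi.sub_apply] using this
    set ν₁ : ι → ℝ := μ₁ + t₂₁ - t₁₂ with hν₁
    set ν₂ : ι → ℝ := μ₂ - t₂₁ + t₁₂ with hν₂
    rw [e1, e2, ← EReal.coe_add] at hle
    -- both conjugates at ν are finite
    have hn1 : convexConj E ν₁ ≠ ⊤ := by
      intro hT
      rw [hT, EReal.top_add_of_ne_bot (conj_ne_bot E ν₂)] at hle
      exact (EReal.coe_lt_top (r₁ + r₂)).not_ge hle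
    have hn2 : convexConj E ν₂ ≠ ⊤ := by
      intro hT
      rw [hT, EReal.add_top_of_ne_bot (conj_ne_bot E ν₁)] at hle
      exact (EReal.coe_lt_top (r₁ + r₂)).not_ge hle
    set s₁ := (convexConj E ν₁).toReal with hs₁
    set s₂ := (convexConj E ν₂).toReal with hs₂
    have f1 : convexConj E ν₁ = (s₁ : EReal) := (EReal.coe_toReal hn1 (conj_ne_bot E ν₁)).symm
    have f2 : convexConj E ν₂ = (s₂ : EReal) := (EReal.coe_toReal hn2 (conj_ne_bot E ν₂)).symm
    rw [f1, f2, ← EReal.coe_add, EReal.coe_le_coe_iff] at hle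
    have hFY1 : (∑ i, ν₁ i * φ₁ i) - E φ₁ ≤ s₁ := by
      have h := pair_le_conj E ν₁ φ₁
      rw [f1, EReal.coe_le_coe_iff] at h
      exact h
    have hFY2 : (∑ i, ν₂ i * φ₂ i) - E φ₂ ≤ s₂ := by
      have h := pair_le_conj E ν₂ φ₂
      rw [f2, EReal.coe_le_coe_iff] at h
      exact h
    -- the pairing inequality
    have hpair : (∑ i, μ₁ i * (φ₁ ⊓ φ₂) i) + (∑ i, μ₂ i * (φ₁ ⊔ φ₂) i)
        ≤ (∑ i, ν₁ i * φ₁ i) + (∑ i, ν₂ i * φ₂ i) := by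
      rw [← Finset.sum_add_distrib, ← Finset.sum_add_distrib]
      apply Finset.sum_le_sum
      intro i _
      have hper := pair_ineq (μ₁ i) (μ₂ i) (φ₁ i) (φ₂ i) (t₂₁ i) (t₁₂ i)
        (by simp only [ht₂₁]) (ht₁₂0' i) (ht₁₂b' i)
      have hv1 : ν₁ i = μ₁ i + t₂₁ i - t₁₂ i := by simp [hν₁]
      have hv2 : ν₂ i = μ₂ i - t₂₁ i + t₁₂ i := by simp [hν₂]
      rw [hinf, hsup, hv1, hv2]
      convert hper using 2 <;> ring
    -- conclude
    have := hμ₁ φ₁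
    linarith [hpair, hFY1, hFY2, hle, hr₁, hr₂]
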